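/- arXiv:1312.4350 — 3 statements merged into one kernel-verified Lean document; each statement's English description precedes it below -/
import Mathlib

section
/- If a finite word w is rich, then its longest palindromic suffix occurs exactly once in w. -/
open List

variable {A : Type*}

/-- All factors (contiguous subwords) of a word, as a list. -/
def Factors (w : List A) : List (List A) := w.tails.flatMap List.inits

/-- The set of distinct palindromic factors of `w` (including the empty word). -/
def palFactors [DecidableEq A] (w : List A) : Finset (List A) :=
  ((Factors w).filter (fun u => decide (u.reverse = u))).toFinset

/-- A word is rich if it has exactly `|w| + 1` distinct palindromic factors. -/
def IsRich [DecidableEq A] (w : List A) : Prop :=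
  (palFactors w).card = w.length + 1

/-- The defect of a finite word. -/
def defect [DecidableEq A] (w : List A) : ℕ :=
  w.length + 1 - (palFactors w).card

/-- `u` is a (finite) factor of the infinite word `z`. -/
def FactorOfInf (u : List A) (z : ℕ → A) : Prop :=
  ∃ i, u = (List.range u.length).map (fun k => z (i + k))

/-- An infinite word is rich if all of its finite factors are rich. -/
def InfRich [DecidableEq A] (z : ℕ → A) : Prop :=
  ∀ u : List A, FactorOfInf u z → IsRich u

/-- The longest palindromic suffix of `w`. -/
def lps [DecidableEq A] (w : List A) : List A :=
  (w.tails.find? (fun u => decide (u.reverse = u))).getD []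

/-- The number of occurrences of `u` as a factor of `w` (counted by position). -/
def occCount [DecidableEq A] (u w : List A) : ℕ :=
  w.tails.countP (fun t => decide (u <+: t))

/-- The periodic infinite word `u^∞`. -/
def periodicWord (u : List A) (hu : u ≠ []) : ℕ → A :=
  fun i => u.get ⟨i % u.length, Nat.mod_lt _ (List.length_pos_iff.mpr hu)⟩

/- ### Auxiliary lemmas -/

lemma prefix_suffix_concat {u t v : List A} {a : A} (h1 : u <+: t) (h2 : t <:+ v ++ [a])
    (h3 : u.length < t.length) : u <:+: v := by
  have ht : t ≠ [] := by rintro rfl; simp at h3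
  have h2' : t.reverse <+: a :: v.reverse := by
    have := reverse_prefix.mpr h2
    simpa using this
  have htr : t.reverse ≠ [] := by simpa using ht
  obtain ⟨b, s, he⟩ := List.exists_cons_of_ne_nil htr
  obtain ⟨r, hr⟩ := h2'
  rw [he] at hr
  injection hr with hb hs
  rw [hb] at he
  have hsuff : s.reverse <:+ v := by
    rw [← reverse_prefix]; simpa using ⟨r, hs⟩
  have htt : t = s.reverse ++ [a] := by
    have := congrArg List.reverse he
    simpa using this
  have hlen : u.length ≤ s.length := by
    rw [htt] at h3; simp at h3; omega
  have hpre : u <+: s.reverse := by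
    have hu := prefix_iff_eq_take.mp h1
    rw [htt, take_append_of_le_length (by simpa using hlen)] at hu
    rw [hu]; exact take_prefix _ _
  exact hpre.isInfix.trans hsuff.isInfix

lemma mem_palFactors [DecidableEq A] {u w : List A} :
    u ∈ palFactors w ↔ u <:+: w ∧ u.reverse = u := by
  simp only [palFactors, Factors, List.mem_toFinset, List.mem_filter, List.mem_flatMap,
    mem_tails, mem_inits, decide_eq_true_eq]
  constructor
  · rintro ⟨⟨t, ht, hu⟩, hp⟩
    exact ⟨infix_iff_prefix_suffix.mpr ⟨t, hu, ht⟩, hp⟩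
  · rintro ⟨hi, hp⟩
    obtain ⟨t, hu, ht⟩ := infix_iff_prefix_suffix.mp hi
    exact ⟨⟨t, ht, hu⟩, hp⟩

lemma lps_spec [DecidableEq A] (w : List A) :
    lps w <:+ w ∧ (lps w).reverse = lps w := by
  have h : ∃ u ∈ w.tails, (fun u : List A => decide (u.reverse = u)) u = true := by
    exact ⟨[], by simp [mem_tails], by simp⟩
  obtain ⟨u, hu⟩ := (List.find?_isSome.mpr h) |> Option.isSome_iff_exists.mp
  have h1 := List.find?_some hu
  have h2 := List.mem_of_find?_eq_some hu
  simp only [lps, hu, Option.getD_some]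
  exact ⟨(mem_tails _ _).mp h2, by simpa using h1⟩

lemma lps_max [DecidableEq A] : ∀ (w u : List A), u <:+ w → u.reverse = u → u <:+ lps w := by
  intro w
  induction w with
  | nil => intro u hu _; simpa [lps] using hu
  | cons a l ih =>
    intro u hu hp
    by_cases hal : (a :: l).reverse = a :: l
    · have : lps (a :: l) = a :: l := by
        simp [lps, tails_cons, List.find?_cons, hal]
      rw [this]; exact hu
    · have hl : lps (a :: l) = lps l := by
        have hd : (decide ((a::l).reverse = a :: l)) = false := decide_eq_false hal
        simp only [lps, tails_cons, List.find?_cons, hd]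
      rw [hl]
      rcases suffix_cons_iff.mp hu with h | h
      · exact absurd (h ▸ hp) hal
      · exact ih u h hp

/-- A palindromic factor of `v ++ [a]` other than the longest palindromic suffix is
already a factor of `v`. -/
lemma pal_infix_concat [DecidableEq A] {u v : List A} {a : A}
    (hi : u <:+: v ++ [a]) (hp : u.reverse = u) (hne : u ≠ lps (v ++ [a])) : u <:+: v := by
  obtain ⟨t, h1, h2⟩ := infix_iff_prefix_suffix.mp hi
  rcases Nat.lt_or_ge u.length t.length with hlt | hge
  · exact prefix_suffix_concat h1 h2 hlt
  · have hut : u = t := h1.eq_of_length (le_antisymm h1.length_le hge)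
    subst hut
    set p := lps (v ++ [a]) with hpdef
    have hps := lps_spec (v ++ [a])
    have husuf : u <:+ p := lps_max _ u h2 hp
    have hlen : u.length < p.length := by
      rcases lt_or_eq_of_le husuf.length_le with h | h
      · exact h
      · exact absurd (husuf.eq_of_length h) hne
    have hupre : u <+: p := by
      have := reverse_prefix.mpr husuf
      rwa [hp, hps.2] at this
    exact prefix_suffix_concat hupre hps.1 hlen

lemma palFactors_subset_insert [DecidableEq A] (v : List A) (a : A) :
    palFactors (v ++ [a]) ⊆ insert (lps (v ++ [a])) (palFactors v) := by
  intro u hu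
  obtain ⟨hi, hp⟩ := mem_palFactors.mp hu
  by_cases hne : u = lps (v ++ [a])
  · rw [hne]; exact Finset.mem_insert_self _ _
  · exact Finset.mem_insert_of_mem (mem_palFactors.mpr ⟨pal_infix_concat hi hp hne, hp⟩)

lemma palFactors_nil [DecidableEq A] : palFactors ([] : List A) = {[]} := by
  ext u
  simp only [mem_palFactors, Finset.mem_singleton]
  constructor
  · rintro ⟨hi, -⟩
    have := List.sublist_nil.mp hi.sublist
    simpa using this
  · rintro rfl; simp

lemma card_palFactors_le [DecidableEq A] (w : List A) :
    (palFactors w).card ≤ w.length + 1 := by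
  induction w using List.reverseRecOn with
  | nil => simp [palFactors_nil]
  | append_singleton v a ih =>
    calc (palFactors (v ++ [a])).card
        ≤ (insert (lps (v ++ [a])) (palFactors v)).card :=
          Finset.card_le_card (palFactors_subset_insert v a)
      _ ≤ (palFactors v).card + 1 := Finset.card_insert_le _ _
      _ ≤ (v ++ [a]).length + 1 := by simp; omega

lemma tails_nodup (w : List A) : w.tails.Nodup := by
  induction w with
  | nil => simp
  | cons a l ih =>
    rw [tails_cons, nodup_cons]
    refine ⟨fun hmem => ?_, ih⟩
    have := ((mem_tails _ _).mp hmem).length_le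
    simp at this

lemma occCount_lps [DecidableEq A] {v : List A} {a : A}
    (hnew : ¬ lps (v ++ [a]) <:+: v) : occCount (lps (v ++ [a])) (v ++ [a]) = 1 := by
  set w := v ++ [a] with hw
  set u := lps w with hu
  have hps := lps_spec w
  rw [occCount, List.countP_eq_length_filter]
  have hmem : u ∈ w.tails.filter (fun t => decide (u <+: t)) := by
    rw [List.mem_filter]
    exact ⟨(mem_tails _ _).mpr hps.1, by simp⟩
  have hall : ∀ x ∈ w.tails.filter (fun t => decide (u <+: t)), x = u := by
    intro x hx
    rw [List.mem_filter] at hx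
    obtain ⟨hxt, hpx⟩ := hx
    have hpre : u <+: x := by simpa using hpx
    have hxs : x <:+ w := (mem_tails _ _).mp hxt
    rcases Nat.lt_or_ge u.length x.length with hlt | hge
    · exact absurd (prefix_suffix_concat hpre hxs hlt) hnew
    · exact (hpre.eq_of_length (le_antisymm hpre.length_le hge)).symm
  have hnd : (w.tails.filter (fun t => decide (u <+: t))).Nodup :=
    (tails_nodup w).filter _
  have hsub : w.tails.filter (fun t => decide (u <+: t)) ⊆ [u] := by
    intro x hx; simp [hall x hx]
  have hle : (w.tails.filter (fun t => decide (u <+: t))).length ≤ 1 := by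
    simpa using (hnd.subperm hsub).length_le
  have hge1 : 1 ≤ (w.tails.filter (fun t => decide (u <+: t))).length :=
    List.length_pos_iff.mpr (ne_nil_of_mem hmem)
  omega

theorem rich_lps_unioccurrent [DecidableEq A] (w : List A) (hw : IsRich w) :
    occCount (lps w) w = 1 := by
  induction w using List.reverseRecOn with
  | nil => simp [occCount, lps]
  | append_singleton v a _ =>
    have hcard : (palFactors (v ++ [a])).card = v.length + 2 := by
      rw [IsRich] at hw; simpa using hw
    have hnotmem : lps (v ++ [a]) ∉ palFactors v := by
      intro hmem
      have h1 : (palFactors (v ++ [a])).card ≤ (palFactors v).card :=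
        Finset.card_le_card (by
          have := palFactors_subset_insert v a
          rwa [Finset.insert_eq_self.mpr hmem] at this)
      have h2 := card_palFactors_le v
      omega
    have hnew : ¬ lps (v ++ [a]) <:+: v := by
      intro hinf
      exact hnotmem (mem_palFactors.mpr ⟨hinf, (lps_spec (v ++ [a])).2⟩)
    exact occCount_lps hnew
end

section
/- The ternary rich word 0020102202 cannot be eventually extended richly in 3 ways: there is no finite word u such that 0020102202·u, 0020102202·u·0, 0020102202·u·1, and 0020102202·u·2 are all rich. -/
open List

variable {A : Type*}

namespace RichCert

/-- Membership in `Factors` is the infix relation. -/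
lemma mem_Factors {w x : List (Fin 3)} : x ∈ Factors w ↔ x <:+: w := by
  simp only [Factors, List.mem_flatMap, List.mem_tails, List.mem_inits]
  constructor
  · rintro ⟨t, ht, hx⟩
    exact hx.isInfix.trans ht.isInfix
  · intro h
    obtain ⟨t, hpre, hsuf⟩ := List.infix_iff_prefix_suffix.mp h
    exact ⟨t, hsuf, hpre⟩

lemma mem_palFactors {w x : List (Fin 3)} :
    x ∈ palFactors w ↔ x.reverse = x ∧ x <:+: w := by
  simp only [palFactors, List.mem_toFinset, List.mem_filter, decide_eq_true_eq]
  rw [mem_Factors]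
  tauto

lemma palFactors_mono {v v' : List (Fin 3)} (h : v <:+: v') :
    palFactors v ⊆ palFactors v' := by
  intro x hx
  rw [mem_palFactors] at hx ⊢
  exact ⟨hx.1, hx.2.trans h⟩

/-- An infix of `v ++ [a]` is an infix of `v` or a suffix of `v ++ [a]`. -/
lemma infix_concat {v x : List (Fin 3)} {a : Fin 3} (h : x <:+: v ++ [a]) :
    x <:+: v ∨ x <:+ v ++ [a] := by
  obtain ⟨s, t, hst⟩ := h
  rcases t.eq_nil_or_concat with rfl | ⟨t', c, rfl⟩
  · right
    exact ⟨s, by simpa using hst⟩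
  · left
    have hst' : (s ++ (x ++ t')) ++ [c] = v ++ [a] := by
      simpa [List.concat_eq_append, List.append_assoc] using hst
    obtain ⟨h1, -⟩ := List.append_inj' hst' rfl
    exact ⟨s, t', by simpa [List.append_assoc] using h1⟩

/-- A prefix occurrence strictly shorter than a suffix of `v ++ [a]` lies in `v`. -/
lemma prefix_of_suffix_concat {y x v : List (Fin 3)} {a : Fin 3}
    (hyx : y <+: x) (hxs : x <:+ v ++ [a]) (hlt : y.length < x.length) :
    y <:+: v := by
  obtain ⟨z, rfl⟩ := hyx
  obtain ⟨p, hp⟩ := hxs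
  rcases z.eq_nil_or_concat with rfl | ⟨z', c, rfl⟩
  · simp at hlt
  · have hp' : (p ++ (y ++ z')) ++ [c] = v ++ [a] := by
      simpa [List.concat_eq_append, List.append_assoc] using hp
    obtain ⟨h1, -⟩ := List.append_inj' hp' rfl
    exact ⟨p, z', by simpa [List.append_assoc] using h1⟩

lemma suffix_of_suffix_le {x y l : List (Fin 3)} (hx : x <:+ l) (hy : y <:+ l)
    (h : x.length ≤ y.length) : x <:+ y :=
  List.suffix_of_suffix_length_le hx hy h

lemma suffix_eq_of_length {x y l : List (Fin 3)} (hx : x <:+ l) (hy : y <:+ l)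
    (h : x.length = y.length) : x = y := by
  have h1 := suffix_of_suffix_le hx hy h.le
  rw [List.suffix_iff_eq_drop] at h1
  simpa [h] using h1

/-- A palindromic suffix of a palindrome is also a prefix. -/
lemma pal_suffix_prefix {p q : List (Fin 3)} (h : p <:+ q)
    (hp : p.reverse = p) (hq : q.reverse = q) : p <+: q := by
  obtain ⟨z, hz⟩ := h
  have : q = p ++ z.reverse := by
    conv_lhs => rw [← hq, ← hz]
    rw [List.reverse_append, hp]
  exact ⟨z.reverse, this.symm⟩

/-- Appending one letter adds at most one new palindromic factor. -/
lemma card_palFactors_concat_le (v : List (Fin 3)) (a : Fin 3) :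
    (palFactors (v ++ [a])).card ≤ (palFactors v).card + 1 := by
  have key : ∀ p ∈ palFactors (v ++ [a]) \ palFactors v,
      ∀ q ∈ palFactors (v ++ [a]) \ palFactors v, p = q := by
    have main : ∀ p q : List (Fin 3),
        p ∈ palFactors (v ++ [a]) \ palFactors v →
        q ∈ palFactors (v ++ [a]) \ palFactors v →
        p.length ≤ q.length → p = q := by
      intro p q hp hq hle
      obtain ⟨hp1, hp2⟩ := Finset.mem_sdiff.mp hp
      obtain ⟨hq1, hq2⟩ := Finset.mem_sdiff.mp hq
      obtain ⟨hppal, hpinf⟩ := mem_palFactors.mp hp1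
      obtain ⟨hqpal, hqinf⟩ := mem_palFactors.mp hq1
      have hps : p <:+ v ++ [a] := by
        rcases infix_concat hpinf with h | h
        · exact absurd (mem_palFactors.mpr ⟨hppal, h⟩) hp2
        · exact h
      have hqs : q <:+ v ++ [a] := by
        rcases infix_concat hqinf with h | h
        · exact absurd (mem_palFactors.mpr ⟨hqpal, h⟩) hq2
        · exact h
      have hpq : p <:+ q := suffix_of_suffix_le hps hqs hle
      have hpre : p <+: q := pal_suffix_prefix hpq hppal hqpal
      by_cases heq : p.length = q.length
      · exact hpre.eq_of_length heq
      · have : p <:+: v := prefix_of_suffix_concat hpre hqs (lt_of_le_of_ne hle heq)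
        exact absurd (mem_palFactors.mpr ⟨hppal, this⟩) hp2
    intro p hp q hq
    rcases le_total p.length q.length with h | h
    · exact main p q hp hq h
    · exact (main q p hq hp h).symm
  have h1 : (palFactors (v ++ [a]) \ palFactors v).card ≤ 1 :=
    Finset.card_le_one.mpr (fun p hp q hq => key p hp q hq)
  calc (palFactors (v ++ [a])).card
      ≤ (palFactors (v ++ [a]) \ palFactors v).card + (palFactors v).card :=
        Finset.card_le_card_sdiff_add_card
    _ ≤ (palFactors v).card + 1 := by omega

lemma card_palFactors_le (v : List (Fin 3)) : (palFactors v).card ≤ v.length + 1 := by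
  induction v using List.reverseRecOn with
  | nil => decide
  | append_singleton v a ih =>
      have := card_palFactors_concat_le v a
      simp only [List.length_append, List.length_singleton]
      omega

lemma rich_of_rich_concat {v : List (Fin 3)} {a : Fin 3}
    (h : IsRich (v ++ [a])) : IsRich v := by
  unfold IsRich at h ⊢
  have h1 := card_palFactors_concat_le v a
  have h2 := card_palFactors_le v
  simp only [List.length_append, List.length_singleton] at h
  omega

end RichCert

namespace RichCert
def tbl3 : List (List (Fin 3) × List (List (Fin 3)) × List (List (Fin 3))) := [
  ([2, 2, 0, 2], [[0], [0, 0], [0, 1, 0], [0, 2, 0], [0, 2, 2, 0], [1], [2], [2, 0, 2], [2, 2]], [[0, 0, 0, 0], [0, 0, 0, 2], [0, 0, 2, 0], [0, 1, 0, 1], [0, 1, 0, 2], [0, 1, 1, 0], [0, 1, 1, 1], [0, 2, 0, 0], [0, 2, 0, 1], [0, 2, 2, 0], [0, 2, 2, 2], [1, 0, 1, 0], [1, 0, 1, 1], [1, 0, 2, 0], [1, 0, 2, 2], [1, 1, 0, 1], [1, 1, 0, 2], [1, 1, 1, 0], [1, 1, 1, 1], [2, 0, 0, 0], [2, 0, 0,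 2], [2, 0, 1, 0], [2, 0, 1, 1], [2, 0, 2, 2], [2, 2, 0, 1], [2, 2, 0, 2], [2, 2, 2, 0], [2, 2, 2, 2]]),
  ([2, 0, 2, 2], [[0], [0, 0], [0, 1, 0], [0, 2, 0], [0, 2, 2, 0], [1], [2], [2, 0, 2], [2, 2]], [[0, 0, 0, 0], [0, 0, 0, 2], [0, 0, 2, 0], [0, 1, 0, 1], [0, 1, 0, 2], [0, 1, 1, 0], [0, 1, 1, 1], [0, 2, 0, 0], [0, 2, 0, 1], [0, 2, 2, 0], [0, 2, 2, 2], [1, 0, 1, 0], [1, 0, 1, 1], [1, 0, 2, 0], [1, 0, 2, 2], [1, 1, 0, 1], [1, 1, 0, 2], [1, 1, 1, 0], [1, 1, 1, 1], [2, 0, 0, 0], [2, 0, 0, 2], [2, 0, 1, 0], [2, 0, 1, 1], [2, 0, 2, 2], [2, 2, 0, 1], [2, 2, 0, 2], [2, 2, 2, 0], [2, 2, 2, 2]]),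
  ([0, 2, 2, 0], [[0], [0, 0], [0, 1, 0], [0, 2, 0], [0, 2, 2, 0], [1], [2], [2, 0, 2], [2, 2]], [[0, 0, 0, 0], [0, 0, 0, 2], [0, 0, 2, 0], [0, 1, 0, 1], [0, 1, 0, 2], [0, 1, 1, 0], [0, 1, 1, 1], [0, 2, 0, 0], [0, 2, 0, 1], [0, 2, 2, 0], [0, 2, 2, 2], [1, 0, 1, 0], [1, 0, 1, 1], [1, 0, 2, 0], [1, 0, 2, 2], [1, 1, 0, 1], [1, 1, 0, 2], [1, 1, 1, 0], [1, 1, 1, 1], [2, 0, 0, 0], [2, 0, 0, 2], [2, 0, 1, 0], [2, 0, 1, 1], [2, 0, 2, 2], [2, 2, 0, 1], [2, 2, 0, 2], [2, 2, 2, 0], [2, 2, 2, 2]]),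
  ([0, 2, 2, 2], [[0], [0, 0], [0, 1, 0], [0, 2, 0], [0, 2, 2, 0], [1], [2], [2, 0, 2], [2, 2], [2, 2, 2]], [[0, 0, 0, 0], [0, 0, 0, 2], [0, 0, 2, 0], [0, 1, 0, 1], [0, 1, 0, 2], [0, 1, 1, 0], [0, 1, 1, 1], [0, 2, 0, 0], [0, 2, 0, 1], [0, 2, 2, 0], [0, 2, 2, 2], [1, 0, 1, 0], [1, 0, 1, 1], [1, 0, 2, 0], [1, 0, 2, 2], [1, 1, 0, 1], [1, 1, 0, 2], [1, 1, 1, 0], [1, 1, 1, 1], [2, 0, 0, 0], [2, 0, 0, 2], [2, 0, 1, 0], [2, 0, 1, 1], [2, 0, 2, 2], [2, 2, 0, 1], [2, 2, 0, 2], [2, 2, 2, 0], [2, 2, 2, 2]]),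
  ([2, 2, 0, 1], [[0], [0, 0], [0, 1, 0], [0, 2, 0], [0, 2, 2, 0], [1], [2], [2, 0, 2], [2, 2]], [[0, 0, 0, 0], [0, 0, 0, 2], [0, 0, 2, 0], [0, 1, 0, 1], [0, 1, 0, 2], [0, 1, 1, 0], [0, 1, 1, 1], [0, 2, 0, 0], [0, 2, 0, 1], [0, 2, 2, 0], [0, 2, 2, 2], [1, 0, 1, 0], [1, 0, 1, 1], [1, 0, 2, 0], [1, 0, 2, 2], [1, 1, 0, 1], [1, 1, 0, 2], [1, 1, 1, 0], [1, 1, 1, 1], [2, 0, 0, 0], [2, 0, 0, 2], [2, 0, 1, 0], [2, 0, 1, 1], [2, 0, 2, 2], [2, 2, 0, 1], [2, 2, 0, 2], [2, 2, 2, 0], [2, 2, 2, 2]]),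
  ([2, 2, 2, 0], [[0], [0, 0], [0, 1, 0], [0, 2, 0], [0, 2, 2, 0], [1], [2], [2, 0, 2], [2, 2], [2, 2, 2]], [[0, 0, 0, 0], [0, 0, 0, 2], [0, 0, 2, 0], [0, 1, 0, 1], [0, 1, 0, 2], [0, 1, 1, 0], [0, 1, 1, 1], [0, 2, 0, 0], [0, 2, 0, 1], [0, 2, 2, 0], [0, 2, 2, 2], [1, 0, 1, 0], [1, 0, 1, 1], [1, 0, 2, 0], [1, 0, 2, 2], [1, 1, 0, 1], [1, 1, 0, 2], [1, 1, 1, 0], [1, 1, 1, 1], [2, 0, 0, 0], [2, 0, 0, 2], [2, 0, 1, 0], [2, 0, 1, 1], [2, 0, 2, 2], [2, 2, 0, 1], [2, 2, 0, 2], [2, 2, 2, 0], [2, 2, 2, 2]]),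
  ([2, 2, 2, 2], [[0], [0, 0], [0, 1, 0], [0, 2, 0], [0, 2, 2, 0], [1], [2], [2, 0, 2], [2, 2], [2, 2, 2], [2, 2, 2, 2]], [[0, 0, 0, 0], [0, 0, 0, 2], [0, 0, 2, 0], [0, 1, 0, 1], [0, 1, 0, 2], [0, 1, 1, 0], [0, 1, 1, 1], [0, 2, 0, 0], [0, 2, 0, 1], [0, 2, 2, 0], [0, 2, 2, 2], [1, 0, 1, 0], [1, 0, 1, 1], [1, 0, 2, 0], [1, 0, 2, 2], [1, 1, 0, 1], [1, 1, 0, 2], [1, 1, 1, 0], [1, 1, 1, 1], [2, 0, 0, 0], [2, 0, 0, 2], [2, 0, 1, 0], [2, 0, 1, 1], [2, 0, 2, 2], [2, 2, 0, 1], [2, 2, 0, 2], [2, 2, 2, 0], [2, 2, 2, 2]]),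
  ([2, 0, 1, 0], [[0], [0, 0], [0, 1, 0], [0, 2, 0], [0, 2, 2, 0], [1], [2], [2, 0, 2], [2, 2]], [[0, 0, 0, 0], [0, 0, 0, 2], [0, 0, 2, 0], [0, 1, 0, 1], [0, 1, 0, 2], [0, 1, 1, 0], [0, 1, 1, 1], [0, 2, 0, 0], [0, 2, 0, 1], [0, 2, 2, 0], [0, 2, 2, 2], [1, 0, 1, 0], [1, 0, 1, 1], [1, 0, 2, 0], [1, 0, 2, 2], [1, 1, 0, 1], [1, 1, 0, 2], [1, 1, 1, 0], [1, 1, 1, 1], [2, 0, 0, 0], [2, 0, 0, 2], [2, 0, 1, 0], [2, 0, 1, 1], [2, 0, 2, 2], [2, 2, 0, 1], [2, 2, 0, 2], [2, 2, 2, 0], [2, 2, 2, 2]]),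
  ([2, 0, 1, 1], [[0], [0, 0], [0, 1, 0], [0, 2, 0], [0, 2, 2, 0], [1], [1, 1], [2], [2, 0, 2], [2, 2]], [[0, 0, 0, 0], [0, 0, 0, 2], [0, 0, 2, 0], [0, 1, 0, 1], [0, 1, 0, 2], [0, 1, 1, 0], [0, 1, 1, 1], [0, 2, 0, 0], [0, 2, 0, 1], [0, 2, 2, 0], [0, 2, 2, 2], [1, 0, 1, 0], [1, 0, 1, 1], [1, 0, 2, 0], [1, 0, 2, 2], [1, 1, 0, 1], [1, 1, 0, 2], [1, 1, 1, 0], [1, 1, 1, 1], [2, 0, 0, 0], [2, 0, 0, 2], [2, 0, 1, 0], [2, 0, 1, 1], [2, 0, 2, 2], [2, 2, 0, 1], [2, 2, 0, 2], [2, 2, 2, 0], [2, 2, 2, 2]]),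
  ([0, 1, 0, 1], [[0], [0, 0], [0, 1, 0], [0, 2, 0], [0, 2, 2, 0], [1], [1, 0, 1], [2], [2, 0, 2], [2, 2]], [[0, 0, 0, 0], [0, 0, 0, 2], [0, 0, 2, 0], [0, 1, 0, 1], [0, 1, 0, 2], [0, 1, 1, 0], [0, 1, 1, 1], [0, 2, 0, 0], [0, 2, 0, 1], [0, 2, 2, 0], [0, 2, 2, 2], [1, 0, 1, 0], [1, 0, 1, 1], [1, 0, 2, 0], [1, 0, 2, 2], [1, 1, 0, 1], [1, 1, 0, 2], [1, 1, 1, 0], [1, 1, 1, 1], [2, 0, 0, 0], [2, 0, 0, 2], [2, 0, 1, 0], [2, 0, 1, 1], [2, 0, 2, 2], [2, 2, 0, 1], [2, 2, 0, 2], [2, 2, 2, 0], [2, 2, 2, 2]]),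
  ([0, 1, 0, 2], [[0], [0, 0], [0, 1, 0], [0, 2, 0], [0, 2, 2, 0], [1], [2], [2, 0, 2], [2, 2]], [[0, 0, 0, 0], [0, 0, 0, 2], [0, 0, 2, 0], [0, 1, 0, 1], [0, 1, 0, 2], [0, 1, 1, 0], [0, 1, 1, 1], [0, 2, 0, 0], [0, 2, 0, 1], [0, 2, 2, 0], [0, 2, 2, 2], [1, 0, 1, 0], [1, 0, 1, 1], [1, 0, 2, 0], [1, 0, 2, 2], [1, 1, 0, 1], [1, 1, 0, 2], [1, 1, 1, 0], [1, 1, 1, 1], [2, 0, 0, 0], [2, 0, 0, 2], [2, 0, 1, 0], [2, 0, 1, 1], [2, 0, 2, 2], [2, 2, 0, 1], [2, 2, 0, 2], [2, 2, 2, 0], [2, 2, 2, 2]]),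
  ([0, 1, 1, 0], [[0], [0, 0], [0, 1, 0], [0, 1, 1, 0], [0, 2, 0], [0, 2, 2, 0], [1], [1, 1], [2], [2, 0, 2], [2, 2]], [[0, 0, 0, 0], [0, 0, 0, 2], [0, 0, 2, 0], [0, 1, 0, 1], [0, 1, 0, 2], [0, 1, 1, 0], [0, 1, 1, 1], [0, 2, 0, 0], [0, 2, 0, 1], [0, 2, 2, 0], [0, 2, 2, 2], [1, 0, 1, 0], [1, 0, 1, 1], [1, 0, 2, 0], [1, 0, 2, 2], [1, 1, 0, 1], [1, 1, 0, 2], [1, 1, 1, 0], [1, 1, 1, 1], [2, 0, 0, 0], [2, 0, 0, 2], [2, 0, 1, 0], [2, 0, 1, 1], [2, 0, 2, 2], [2, 2, 0, 1], [2, 2, 0, 2], [2, 2, 2, 0], [2, 2, 2, 2]]),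
  ([0, 1, 1, 1], [[0], [0, 0], [0, 1, 0], [0, 2, 0], [0, 2, 2, 0], [1], [1, 1], [1, 1, 1], [2], [2, 0, 2], [2, 2]], [[0, 0, 0, 0], [0, 0, 0, 2], [0, 0, 2, 0], [0, 1, 0, 1], [0, 1, 0, 2], [0, 1, 1, 0], [0, 1, 1, 1], [0, 2, 0, 0], [0, 2, 0, 1], [0, 2, 2, 0], [0, 2, 2, 2], [1, 0, 1, 0], [1, 0, 1, 1], [1, 0, 2, 0], [1, 0, 2, 2], [1, 1, 0, 1], [1, 1, 0, 2], [1, 1, 1, 0], [1, 1, 1, 1], [2, 0, 0, 0], [2, 0, 0, 2], [2, 0, 1, 0], [2, 0, 1, 1], [2, 0, 2, 2], [2, 2, 0, 1], [2, 2, 0, 2], [2, 2, 2, 0], [2, 2, 2, 2]]),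
  ([1, 0, 1, 0], [[0], [0, 0], [0, 1, 0], [0, 2, 0], [0, 2, 2, 0], [1], [1, 0, 1], [2], [2, 0, 2], [2, 2]], [[0, 0, 0, 0], [0, 0, 0, 2], [0, 0, 2, 0], [0, 1, 0, 1], [0, 1, 0, 2], [0, 1, 1, 0], [0, 1, 1, 1], [0, 2, 0, 0], [0, 2, 0, 1], [0, 2, 2, 0], [0, 2, 2, 2], [1, 0, 1, 0], [1, 0, 1, 1], [1, 0, 2, 0], [1, 0, 2, 2], [1, 1, 0, 1], [1, 1, 0, 2], [1, 1, 1, 0], [1, 1, 1, 1], [2, 0, 0, 0], [2, 0, 0, 2], [2, 0, 1, 0], [2, 0, 1, 1], [2, 0, 2, 2], [2, 2, 0, 1], [2, 2, 0, 2], [2, 2, 2, 0], [2, 2, 2, 2]]),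
  ([1, 0, 1, 1], [[0], [0, 0], [0, 1, 0], [0, 2, 0], [0, 2, 2, 0], [1], [1, 0, 1], [1, 1], [2], [2, 0, 2], [2, 2]], [[0, 0, 0, 0], [0, 0, 0, 2], [0, 0, 2, 0], [0, 1, 0, 1], [0, 1, 0, 2], [0, 1, 1, 0], [0, 1, 1, 1], [0, 2, 0, 0], [0, 2, 0, 1], [0, 2, 2, 0], [0, 2, 2, 2], [1, 0, 1, 0], [1, 0, 1, 1], [1, 0, 2, 0], [1, 0, 2, 2], [1, 1, 0, 1], [1, 1, 0, 2], [1, 1, 1, 0], [1, 1, 1, 1], [2, 0, 0, 0], [2, 0, 0, 2], [2, 0, 1, 0], [2, 0, 1, 1], [2, 0, 2, 2], [2, 2, 0, 1], [2, 2, 0, 2], [2, 2, 2, 0], [2, 2, 2, 2]]),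
  ([1, 0, 2, 0], [[0], [0, 0], [0, 1, 0], [0, 2, 0], [0, 2, 2, 0], [1], [2], [2, 0, 2], [2, 2]], [[0, 0, 0, 0], [0, 0, 0, 2], [0, 0, 2, 0], [0, 1, 0, 1], [0, 1, 0, 2], [0, 1, 1, 0], [0, 1, 1, 1], [0, 2, 0, 0], [0, 2, 0, 1], [0, 2, 2, 0], [0, 2, 2, 2], [1, 0, 1, 0], [1, 0, 1, 1], [1, 0, 2, 0], [1, 0, 2, 2], [1, 1, 0, 1], [1, 1, 0, 2], [1, 1, 1, 0], [1, 1, 1, 1], [2, 0, 0, 0], [2, 0, 0, 2], [2, 0, 1, 0], [2, 0, 1, 1], [2, 0, 2, 2], [2, 2, 0, 1], [2, 2, 0, 2], [2, 2, 2, 0], [2, 2, 2, 2]]),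
  ([1, 0, 2, 2], [[0], [0, 0], [0, 1, 0], [0, 2, 0], [0, 2, 2, 0], [1], [2], [2, 0, 2], [2, 2]], [[0, 0, 0, 0], [0, 0, 0, 2], [0, 0, 2, 0], [0, 1, 0, 1], [0, 1, 0, 2], [0, 1, 1, 0], [0, 1, 1, 1], [0, 2, 0, 0], [0, 2, 0, 1], [0, 2, 2, 0], [0, 2, 2, 2], [1, 0, 1, 0], [1, 0, 1, 1], [1, 0, 2, 0], [1, 0, 2, 2], [1, 1, 0, 1], [1, 1, 0, 2], [1, 1, 1, 0], [1, 1, 1, 1], [2, 0, 0, 0], [2, 0, 0, 2], [2, 0, 1, 0], [2, 0, 1, 1], [2, 0, 2, 2], [2, 2, 0, 1], [2, 2, 0, 2], [2, 2, 2, 0], [2, 2, 2, 2]]),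
  ([1, 1, 0, 1], [[0], [0, 0], [0, 1, 0], [0, 2, 0], [0, 2, 2, 0], [1], [1, 0, 1], [1, 1], [2], [2, 0, 2], [2, 2]], [[0, 0, 0, 0], [0, 0, 0, 2], [0, 0, 2, 0], [0, 1, 0, 1], [0, 1, 0, 2], [0, 1, 1, 0], [0, 1, 1, 1], [0, 2, 0, 0], [0, 2, 0, 1], [0, 2, 2, 0], [0, 2, 2, 2], [1, 0, 1, 0], [1, 0, 1, 1], [1, 0, 2, 0], [1, 0, 2, 2], [1, 1, 0, 1], [1, 1, 0, 2], [1, 1, 1, 0], [1, 1, 1, 1], [2, 0, 0, 0], [2, 0, 0, 2], [2, 0, 1, 0], [2, 0, 1, 1], [2, 0, 2, 2], [2, 2, 0, 1], [2, 2, 0, 2], [2, 2, 2, 0], [2, 2, 2, 2]]),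
  ([1, 1, 0, 2], [[0], [0, 0], [0, 1, 0], [0, 2, 0], [0, 2, 2, 0], [1], [1, 1], [2], [2, 0, 2], [2, 2]], [[0, 0, 0, 0], [0, 0, 0, 2], [0, 0, 2, 0], [0, 1, 0, 1], [0, 1, 0, 2], [0, 1, 1, 0], [0, 1, 1, 1], [0, 2, 0, 0], [0, 2, 0, 1], [0, 2, 2, 0], [0, 2, 2, 2], [1, 0, 1, 0], [1, 0, 1, 1], [1, 0, 2, 0], [1, 0, 2, 2], [1, 1, 0, 1], [1, 1, 0, 2], [1, 1, 1, 0], [1, 1, 1, 1], [2, 0, 0, 0], [2, 0, 0, 2], [2, 0, 1, 0], [2, 0, 1, 1], [2, 0, 2, 2], [2, 2, 0, 1], [2, 2, 0, 2], [2, 2, 2, 0], [2, 2, 2, 2]]),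
  ([1, 1, 1, 0], [[0], [0, 0], [0, 1, 0], [0, 2, 0], [0, 2, 2, 0], [1], [1, 1], [1, 1, 1], [2], [2, 0, 2], [2, 2]], [[0, 0, 0, 0], [0, 0, 0, 2], [0, 0, 2, 0], [0, 1, 0, 1], [0, 1, 0, 2], [0, 1, 1, 0], [0, 1, 1, 1], [0, 2, 0, 0], [0, 2, 0, 1], [0, 2, 2, 0], [0, 2, 2, 2], [1, 0, 1, 0], [1, 0, 1, 1], [1, 0, 2, 0], [1, 0, 2, 2], [1, 1, 0, 1], [1, 1, 0, 2], [1, 1, 1, 0], [1, 1, 1, 1], [2, 0, 0, 0], [2, 0, 0, 2], [2, 0, 1, 0], [2, 0, 1, 1], [2, 0, 2, 2], [2, 2, 0, 1], [2, 2, 0, 2], [2, 2, 2, 0], [2, 2, 2, 2]]),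
  ([1, 1, 1, 1], [[0], [0, 0], [0, 1, 0], [0, 2, 0], [0, 2, 2, 0], [1], [1, 1], [1, 1, 1], [1, 1, 1, 1], [2], [2, 0, 2], [2, 2]], [[0, 0, 0, 0], [0, 0, 0, 2], [0, 0, 2, 0], [0, 1, 0, 1], [0, 1, 0, 2], [0, 1, 1, 0], [0, 1, 1, 1], [0, 2, 0, 0], [0, 2, 0, 1], [0, 2, 2, 0], [0, 2, 2, 2], [1, 0, 1, 0], [1, 0, 1, 1], [1, 0, 2, 0], [1, 0, 2, 2], [1, 1, 0, 1], [1, 1, 0, 2], [1, 1, 1, 0], [1, 1, 1, 1], [2, 0, 0, 0], [2, 0, 0, 2], [2, 0, 1, 0], [2, 0, 1, 1], [2, 0, 2, 2], [2, 2, 0, 1], [2, 2, 0, 2], [2, 2, 2, 0], [2, 2, 2, 2]]),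
  ([0, 2, 0, 0], [[0], [0, 0], [0, 1, 0], [0, 2, 0], [0, 2, 2, 0], [1], [2], [2, 0, 2], [2, 2]], [[0, 0, 0, 0], [0, 0, 0, 2], [0, 0, 2, 0], [0, 1, 0, 1], [0, 1, 0, 2], [0, 1, 1, 0], [0, 1, 1, 1], [0, 2, 0, 0], [0, 2, 0, 1], [0, 2, 2, 0], [0, 2, 2, 2], [1, 0, 1, 0], [1, 0, 1, 1], [1, 0, 2, 0], [1, 0, 2, 2], [1, 1, 0, 1], [1, 1, 0, 2], [1, 1, 1, 0], [1, 1, 1, 1], [2, 0, 0, 0], [2, 0, 0, 2], [2, 0, 1, 0], [2, 0, 1, 1], [2, 0, 2, 2], [2, 2, 0, 1], [2, 2, 0, 2], [2, 2, 2, 0], [2, 2, 2, 2]]),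
  ([0, 2, 0, 1], [[0], [0, 0], [0, 1, 0], [0, 2, 0], [0, 2, 2, 0], [1], [2], [2, 0, 2], [2, 2]], [[0, 0, 0, 0], [0, 0, 0, 2], [0, 0, 2, 0], [0, 1, 0, 1], [0, 1, 0, 2], [0, 1, 1, 0], [0, 1, 1, 1], [0, 2, 0, 0], [0, 2, 0, 1], [0, 2, 2, 0], [0, 2, 2, 2], [1, 0, 1, 0], [1, 0, 1, 1], [1, 0, 2, 0], [1, 0, 2, 2], [1, 1, 0, 1], [1, 1, 0, 2], [1, 1, 1, 0], [1, 1, 1, 1], [2, 0, 0, 0], [2, 0, 0, 2], [2, 0, 1, 0], [2, 0, 1, 1], [2, 0, 2, 2], [2, 2, 0, 1], [2, 2, 0, 2], [2, 2, 2, 0], [2, 2, 2, 2]]),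
  ([2, 0, 0, 0], [[0], [0, 0], [0, 0, 0], [0, 1, 0], [0, 2, 0], [0, 2, 2, 0], [1], [2], [2, 0, 2], [2, 2]], [[0, 0, 0, 0], [0, 0, 0, 2], [0, 0, 2, 0], [0, 1, 0, 1], [0, 1, 0, 2], [0, 1, 1, 0], [0, 1, 1, 1], [0, 2, 0, 0], [0, 2, 0, 1], [0, 2, 2, 0], [0, 2, 2, 2], [1, 0, 1, 0], [1, 0, 1, 1], [1, 0, 2, 0], [1, 0, 2, 2], [1, 1, 0, 1], [1, 1, 0, 2], [1, 1, 1, 0], [1, 1, 1, 1], [2, 0, 0, 0], [2, 0, 0, 2], [2, 0, 1, 0], [2, 0, 1, 1], [2, 0, 2, 2], [2, 2, 0, 1], [2, 2, 0, 2], [2, 2, 2, 0], [2, 2, 2, 2]]),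
  ([2, 0, 0, 2], [[0], [0, 0], [0, 1, 0], [0, 2, 0], [0, 2, 2, 0], [1], [2], [2, 0, 0, 2], [2, 0, 2], [2, 2]], [[0, 0, 0, 0], [0, 0, 0, 2], [0, 0, 2, 0], [0, 1, 0, 1], [0, 1, 0, 2], [0, 1, 1, 0], [0, 1, 1, 1], [0, 2, 0, 0], [0, 2, 0, 1], [0, 2, 2, 0], [0, 2, 2, 2], [1, 0, 1, 0], [1, 0, 1, 1], [1, 0, 2, 0], [1, 0, 2, 2], [1, 1, 0, 1], [1, 1, 0, 2], [1, 1, 1, 0], [1, 1, 1, 1], [2, 0, 0, 0], [2, 0, 0, 2], [2, 0, 1, 0], [2, 0, 1, 1], [2, 0, 2, 2], [2, 2, 0, 1], [2, 2, 0, 2], [2, 2, 2, 0], [2, 2, 2, 2]]),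
  ([0, 0, 0, 0], [[0], [0, 0], [0, 0, 0], [0, 0, 0, 0], [0, 1, 0], [0, 2, 0], [0, 2, 2, 0], [1], [2], [2, 0, 2], [2, 2]], [[0, 0, 0, 0], [0, 0, 0, 2], [0, 0, 2, 0], [0, 1, 0, 1], [0, 1, 0, 2], [0, 1, 1, 0], [0, 1, 1, 1], [0, 2, 0, 0], [0, 2, 0, 1], [0, 2, 2, 0], [0, 2, 2, 2], [1, 0, 1, 0], [1, 0, 1, 1], [1, 0, 2, 0], [1, 0, 2, 2], [1, 1, 0, 1], [1, 1, 0, 2], [1, 1, 1, 0], [1, 1, 1, 1], [2, 0, 0, 0], [2, 0, 0, 2], [2, 0, 1, 0], [2, 0, 1, 1], [2, 0, 2, 2], [2, 2, 0, 1], [2, 2, 0, 2], [2, 2, 2, 0], [2, 2, 2, 2]]),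
  ([0, 0, 0, 2], [[0], [0, 0], [0, 0, 0], [0, 1, 0], [0, 2, 0], [0, 2, 2, 0], [1], [2], [2, 0, 2], [2, 2]], [[0, 0, 0, 0], [0, 0, 0, 2], [0, 0, 2, 0], [0, 1, 0, 1], [0, 1, 0, 2], [0, 1, 1, 0], [0, 1, 1, 1], [0, 2, 0, 0], [0, 2, 0, 1], [0, 2, 2, 0], [0, 2, 2, 2], [1, 0, 1, 0], [1, 0, 1, 1], [1, 0, 2, 0], [1, 0, 2, 2], [1, 1, 0, 1], [1, 1, 0, 2], [1, 1, 1, 0], [1, 1, 1, 1], [2, 0, 0, 0], [2, 0, 0, 2], [2, 0, 1, 0], [2, 0, 1, 1], [2, 0, 2, 2], [2, 2, 0, 1], [2, 2, 0, 2], [2, 2, 2, 0], [2, 2, 2, 2]]),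
  ([0, 0, 2, 0], [[0], [0, 0], [0, 1, 0], [0, 2, 0], [0, 2, 2, 0], [1], [2], [2, 0, 2], [2, 2]], [[0, 0, 0, 0], [0, 0, 0, 2], [0, 0, 2, 0], [0, 1, 0, 1], [0, 1, 0, 2], [0, 1, 1, 0], [0, 1, 1, 1], [0, 2, 0, 0], [0, 2, 0, 1], [0, 2, 2, 0], [0, 2, 2, 2], [1, 0, 1, 0], [1, 0, 1, 1], [1, 0, 2, 0], [1, 0, 2, 2], [1, 1, 0, 1], [1, 1, 0, 2], [1, 1, 1, 0], [1, 1, 1, 1], [2, 0, 0, 0], [2, 0, 0, 2], [2, 0, 1, 0], [2, 0, 1, 1], [2, 0, 2, 2], [2, 2, 0, 1], [2, 2, 0, 2], [2, 2, 2, 0], [2, 2, 2, 2]])]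
end RichCert

namespace RichCert

/-- The next window of length 4 after appending `a`. -/
def nxt (s : List (Fin 3)) (a : Fin 3) : List (Fin 3) := (s ++ [a]).drop 1

/-- The kill certificate: appending the corresponding letter cannot keep the word rich. -/
def KillP (lo hi : List (List (Fin 3))) (t : List (Fin 3)) : Prop :=
  t.reverse ∉ hi ∧ ∃ r ∈ t.tails, r ∈ lo ∧ ∀ q ∈ t.tails, q.reverse = q → q <+: r

instance (lo hi : List (List (Fin 3))) (t : List (Fin 3)) : Decidable (KillP lo hi t) := by
  unfold KillP; infer_instance

/-- Soundness of the kill certificate. -/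
lemma kill_sound {v t : List (Fin 3)} {a : Fin 3} {lo hi : List (List (Fin 3))}
    (hv : IsRich v)
    (hlo : ∀ x ∈ lo, x <:+: v)
    (hhi : ∀ x : List (Fin 3), x.length = 4 → x <:+: v → x ∈ hi)
    (ht : t <:+ v ++ [a]) (htl : t.length = 4)
    (hk : KillP lo hi t) : ¬ IsRich (v ++ [a]) := by
  obtain ⟨hrev, r, hrt, hrlo, hmax⟩ := hk
  have hr : r <:+: v := hlo r hrlo
  have hnotrev : ¬ t.reverse <:+: v := fun h => hrev (hhi _ (by simp [htl]) h)
  have key : palFactors (v ++ [a]) = palFactors v := by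
    apply Finset.Subset.antisymm
    · intro x hx
      obtain ⟨hpal, hinf⟩ := mem_palFactors.mp hx
      rcases infix_concat hinf with hxv | hxs
      · exact mem_palFactors.mpr ⟨hpal, hxv⟩
      · by_cases hlen : x.length ≤ t.length
        · have hxt : x <:+ t := suffix_of_suffix_le hxs ht hlen
          have hxr : x <+: r := hmax x ((List.mem_tails _ _).mpr hxt) hpal
          exact mem_palFactors.mpr ⟨hpal, hxr.isInfix.trans hr⟩
        · push_neg at hlen
          have htx : t <:+ x := suffix_of_suffix_le ht hxs hlen.le
          have htp : t.reverse <+: x := by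
            have := List.reverse_prefix.mpr htx
            rwa [hpal] at this
          have : t.reverse <:+: v :=
            prefix_of_suffix_concat htp hxs (by simpa using hlen)
          exact absurd this hnotrev
    · exact palFactors_mono ((List.prefix_append v [a]).isInfix)
  intro hcontra
  unfold IsRich at hv hcontra
  rw [key, hv] at hcontra
  simp at hcontra

end RichCert

namespace RichCert

def w0 : List (Fin 3) := [0, 0, 2, 0, 1, 0, 2, 2, 0, 2]

/-- The invariant maintained by every rich word extending `w0`. -/
def Inv (v : List (Fin 3)) : Prop :=
  ∃ e ∈ tbl3, e.1 <:+ v ∧ (∀ x ∈ e.2.1, x <:+: v) ∧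
    (∀ x : List (Fin 3), x.length = 4 → x <:+: v → x ∈ e.2.2)

lemma cert_len : ∀ e ∈ tbl3, e.1.length = 4 := by decide

lemma inv_w0 : Inv w0 := by
  obtain ⟨e, hmem, hwin, hlo, hhi⟩ :
      ∃ e ∈ tbl3, e.1 <:+ w0 ∧ (∀ x ∈ e.2.1, x <:+: w0) ∧
        (∀ x ∈ Factors w0, x.length = 4 → x ∈ e.2.2) := by decide
  exact ⟨e, hmem, hwin, hlo, fun x hx hinf => hhi x (mem_Factors.mpr hinf) hx⟩

lemma cert_step : ∀ e ∈ tbl3, ∀ a : Fin 3,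
    KillP e.2.1 e.2.2 (nxt e.1 a) ∨
    (∃ e' ∈ tbl3, e'.1 = nxt e.1 a ∧
      (∀ x ∈ e'.2.1, x ∈ e.2.1 ∨ x <:+ nxt e.1 a) ∧
      (∀ x ∈ e.2.2, x ∈ e'.2.2) ∧ nxt e.1 a ∈ e'.2.2) := by decide

lemma cert_safe : ∀ e ∈ tbl3, ∃ a : Fin 3, KillP e.2.1 e.2.2 (nxt e.1 a) := by decide

lemma nxt_suffix {v : List (Fin 3)} {s : List (Fin 3)} (a : Fin 3)
    (h : s <:+ v) : nxt s a <:+ v ++ [a] := by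
  obtain ⟨p, rfl⟩ := h
  exact (List.drop_suffix 1 (s ++ [a])).trans ⟨p, by simp⟩

lemma nxt_length {s : List (Fin 3)} (a : Fin 3) (h : s.length = 4) :
    (nxt s a).length = 4 := by simp [nxt, h]

/-- Main induction: every rich word extending `w0` satisfies the invariant. -/
lemma inv_of_rich : ∀ u : List (Fin 3), IsRich (w0 ++ u) → Inv (w0 ++ u) := by
  intro u
  induction u using List.reverseRecOn with
  | nil => intro _; simpa using inv_w0
  | append_singleton u a ih =>
      intro hrich
      rw [← List.append_assoc] at hrich
      have hrich' : IsRich (w0 ++ u) := rich_of_rich_concat hrich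
      obtain ⟨e, hmem, hwin, hlo, hhi⟩ := ih hrich'
      have hel := cert_len e hmem
      have htsuf : nxt e.1 a <:+ (w0 ++ u) ++ [a] := nxt_suffix a hwin
      have htlen : (nxt e.1 a).length = 4 := nxt_length a hel
      rcases cert_step e hmem a with hkill | ⟨e', hmem', hwin', hloc, hhic, htc⟩
      · exact absurd hrich (kill_sound hrich' hlo hhi htsuf htlen hkill)
      · rw [← List.append_assoc]
        refine ⟨e', hmem', ?_, ?_, ?_⟩
        · rw [hwin']; exact htsuf
        · intro x hx
          rcases hloc x hx with h | h
          · exact (hlo x h).trans (List.prefix_append (w0 ++ u) [a]).isInfix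
          · exact (h.trans htsuf).isInfix
        · intro x hx hinf
          rcases infix_concat hinf with h | h
          · exact hhic x (hhi x hx h)
          · have : x = nxt e.1 a := suffix_eq_of_length h htsuf (by rw [hx, htlen])
            rw [this]; exact htc

end RichCert

theorem ternary_word_not_eventually_extendable_three_ways :
    ¬ ∃ u : List (Fin 3),
      IsRich (([0, 0, 2, 0, 1, 0, 2, 2, 0, 2] : List (Fin 3)) ++ u) ∧
      ∀ a : Fin 3,
        IsRich (([0, 0, 2, 0, 1, 0, 2, 2, 0, 2] : List (Fin 3)) ++ u ++ [a]) := by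
  rintro ⟨u, hu, hext⟩
  obtain ⟨e, hmem, hwin, hlo, hhi⟩ := RichCert.inv_of_rich u hu
  obtain ⟨a, hkill⟩ := RichCert.cert_safe e hmem
  have hel := RichCert.cert_len e hmem
  have htsuf := RichCert.nxt_suffix a hwin
  have hbad := RichCert.kill_sound hu hlo hhi htsuf (RichCert.nxt_length a hel) hkill
  have := hext a
  rw [List.append_assoc] at hbad
  exact hbad this
end

section
/- Let r_2(n) be the number of binary rich words of length n. Then for all n ≥ 8, r_2(n) ≤ 252 · r_2(n−8), and consequently r_2(n)/2^n ≤ (63/64)^{⌊n/8⌋}, so the proportion of rich binary words decreases exponentially. -/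
open List

variable {A : Type*}

/-- The number of binary rich words of length `n`. -/
noncomputable def r2 (n : ℕ) : ℕ :=
  Nat.card {f : Fin n → Fin 2 // IsRich (List.ofFn f)}


instance [DecidableEq A] : DecidablePred (IsRich (A := A)) := fun _ =>
  inferInstanceAs (Decidable (_ = _))

lemma palFactors_mono [DecidableEq A] {u w : List A} (h : u <:+: w) :
    palFactors u ⊆ palFactors w := fun x hx => by
  rw [mem_palFactors] at hx ⊢
  exact ⟨hx.1.trans h, hx.2⟩

lemma infix_of_append_singleton {s u t w : List A} {a : A}
    (h : s ++ u ++ t = w ++ [a]) (ht : t ≠ []) : u <:+: w := by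
  have hp : s ++ u <+: w ++ [a] := ⟨t, by simpa using h⟩
  have hlen : (s ++ u).length ≤ w.length := by
    have h' := congrArg List.length h
    simp only [List.length_append, List.length_cons, List.length_nil] at h'
    have : 1 ≤ t.length := List.length_pos_iff.mpr ht
    simp only [List.length_append]
    omega
  have hw : s ++ u <+: w :=
    List.prefix_of_prefix_length_le hp (List.prefix_append w [a]) (by simpa using hlen)
  obtain ⟨r, hr⟩ := hw
  exact ⟨s, r, by simpa using hr⟩

lemma palFactors_append_subset [DecidableEq A] (w : List A) (a : A) :
    ∃ P, palFactors (w ++ [a]) ⊆ insert P (palFactors w) := by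
  obtain ⟨P, hPmem, hPmax⟩ := Finset.exists_max_image
    ((w ++ [a]).tails.toFinset.filter (fun u => u.reverse = u)) List.length
    ⟨[], by simp⟩
  simp only [Finset.mem_filter, List.mem_toFinset, List.mem_tails] at hPmem hPmax
  obtain ⟨hPsuf, hPpal⟩ := hPmem
  refine ⟨P, fun u hu => ?_⟩
  rw [mem_palFactors] at hu
  obtain ⟨⟨s, t, hst⟩, hpal⟩ := hu
  by_cases ht : t = []
  · subst ht
    simp only [List.append_nil] at hst
    have hu_suf : u <:+ w ++ [a] := ⟨s, hst⟩
    have hlen : u.length ≤ P.length := hPmax u ⟨hu_suf, hpal⟩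
    have husP : u <:+ P := List.suffix_of_suffix_length_le hu_suf hPsuf hlen
    by_cases he : u = P
    · exact he ▸ Finset.mem_insert_self _ _
    · have hupre : u <+: P := by
        rw [← hpal, ← hPpal]
        exact List.reverse_prefix.mpr husP
      obtain ⟨t', ht'⟩ := hupre
      have ht'ne : t' ≠ [] := by
        rintro rfl; exact he (by simpa using ht')
      obtain ⟨s', hs'⟩ := hPsuf
      have : u <:+: w := by
        refine infix_of_append_singleton (s := s') (t := t') (w := w) (a := a) ?_ ht'ne
        rw [← hs', ← ht']; simp
      exact Finset.mem_insert_of_mem (mem_palFactors.mpr ⟨this, hpal⟩)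
  · exact Finset.mem_insert_of_mem
      (mem_palFactors.mpr ⟨infix_of_append_singleton hst ht, hpal⟩)

lemma card_palFactors_append [DecidableEq A] (w : List A) (a : A) :
    (palFactors (w ++ [a])).card ≤ (palFactors w).card + 1 := by
  obtain ⟨P, hP⟩ := palFactors_append_subset w a
  calc (palFactors (w ++ [a])).card ≤ (insert P (palFactors w)).card := Finset.card_le_card hP
    _ ≤ (palFactors w).card + 1 := Finset.card_insert_le _ _

lemma card_palFactors_append_list [DecidableEq A] (w v : List A) :
    (palFactors (w ++ v)).card ≤ (palFactors w).card + v.length := by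
  induction v using List.reverseRecOn with
  | nil => simp
  | append_singleton v a ih =>
      rw [← List.append_assoc]
      have := card_palFactors_append (w ++ v) a
      simp only [List.length_append, List.length_cons, List.length_nil]
      omega

lemma IsRich.prefix [DecidableEq A] {u w : List A} (h : IsRich w) (hp : u <+: w) :
    IsRich u := by
  obtain ⟨v, rfl⟩ := hp
  have h1 := card_palFactors_append_list u v
  have h3 := card_palFactors_le u
  unfold IsRich at h ⊢
  simp only [List.length_append] at h
  omega

lemma palFactors_reverse [DecidableEq A] (w : List A) :
    palFactors w.reverse = palFactors w := by
  ext u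
  rw [mem_palFactors, mem_palFactors]
  constructor <;> rintro ⟨hi, hp⟩ <;> refine ⟨?_, hp⟩
  · have := List.reverse_infix.mpr hi
    rw [hp, List.reverse_reverse] at this
    exact this
  · have := List.reverse_infix.mpr hi
    rw [hp] at this
    exact this

lemma IsRich.reverse [DecidableEq A] {w : List A} (h : IsRich w) : IsRich w.reverse := by
  unfold IsRich at h ⊢
  rw [palFactors_reverse, List.length_reverse]
  exact h

lemma IsRich.suffix [DecidableEq A] {v w : List A} (h : IsRich w) (hs : v <:+ w) :
    IsRich v := by
  have h1 : v.reverse <+: w.reverse := List.reverse_prefix.mpr hs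
  have h2 := (h.reverse.prefix h1).reverse
  simpa using h2

-- counting

abbrev RichList (n : ℕ) := {l : List (Fin 2) // l.length = n ∧ IsRich l}

def richEquiv (n : ℕ) : {f : Fin n → Fin 2 // IsRich (List.ofFn f)} ≃ RichList n where
  toFun f := ⟨List.ofFn f.1, by simp, f.2⟩
  invFun l := ⟨fun i => l.1.get (Fin.cast l.2.1.symm i), by
    obtain ⟨l, hl, hr⟩ := l
    subst hl
    simpa [List.ofFn_get] using hr⟩
  left_inv f := by
    ext i
    simp [List.get_ofFn]
  right_inv l := by
    obtain ⟨l, hl, hr⟩ := l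
    subst hl
    exact Subtype.ext (List.ofFn_get l)

instance (n : ℕ) : Fintype (RichList n) := Fintype.ofEquiv _ (richEquiv n)

lemma r2_eq (n : ℕ) : r2 n = Fintype.card (RichList n) := by
  rw [r2, Nat.card_congr (richEquiv n), Nat.card_eq_fintype_card]

set_option maxRecDepth 100000 in
set_option maxHeartbeats 4000000 in
lemma card8 : Fintype.card (RichList 8) = 252 := by
  rw [← Fintype.card_congr (richEquiv 8)]
  decide +kernel

lemma r2_le_mul (n : ℕ) (hn : 8 ≤ n) : r2 n ≤ 252 * r2 (n - 8) := by
  have key : Fintype.card (RichList n) ≤ Fintype.card (RichList (n - 8) × RichList 8) := by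
    apply Fintype.card_le_of_injective
      (fun l => (⟨l.1.take (n - 8), by rw [List.length_take, l.2.1]; omega,
                   l.2.2.prefix (List.take_prefix _ _)⟩,
                 ⟨l.1.drop (n - 8), by rw [List.length_drop, l.2.1]; omega,
                   l.2.2.suffix (List.drop_suffix _ _)⟩))
    intro x y h
    have h1 : x.1.take (n - 8) = y.1.take (n - 8) := congrArg (fun p => p.1.1) h
    have h2 : x.1.drop (n - 8) = y.1.drop (n - 8) := congrArg (fun p => p.2.1) h
    apply Subtype.ext
    rw [← List.take_append_drop (n - 8) x.1, ← List.take_append_drop (n - 8) y.1, h1, h2]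
  rw [r2_eq, r2_eq]
  calc Fintype.card (RichList n) ≤ Fintype.card (RichList (n - 8) × RichList 8) := key
    _ = Fintype.card (RichList (n - 8)) * 252 := by rw [Fintype.card_prod, card8]
    _ = 252 * Fintype.card (RichList (n - 8)) := Nat.mul_comm _ _

lemma r2_le_pow (n : ℕ) : r2 n ≤ 2 ^ n := by
  rw [r2, Nat.card_eq_fintype_card]
  calc Fintype.card {f : Fin n → Fin 2 // IsRich (List.ofFn f)}
      ≤ Fintype.card (Fin n → Fin 2) := Fintype.card_subtype_le _
    _ = 2 ^ n := by simp

lemma ratio (n : ℕ) : (r2 n : ℝ) / 2 ^ n ≤ (63 / 64 : ℝ) ^ (n / 8) := by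
  induction n using Nat.strong_induction_on with
  | _ n ih =>
    by_cases hn : 8 ≤ n
    · have h1 := r2_le_mul n hn
      have h2 := ih (n - 8) (by omega)
      have hdiv : n / 8 = (n - 8) / 8 + 1 := by omega
      have hpow : (2 : ℝ) ^ n = 2 ^ (n - 8) * 2 ^ 8 := by
        rw [← pow_add]; congr 1; omega
      have e : (r2 n : ℝ) ≤ 252 * r2 (n - 8) := by exact_mod_cast h1
      have hposm : (0:ℝ) < 2 ^ (n - 8) * 2 ^ 8 := by positivity
      rw [hdiv, pow_succ, hpow]
      calc (r2 n : ℝ) / (2 ^ (n - 8) * 2 ^ 8)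
          ≤ (252 * r2 (n - 8)) / (2 ^ (n - 8) * 2 ^ 8) := by gcongr
        _ = ((r2 (n - 8) : ℝ) / 2 ^ (n - 8)) * (63 / 64) := by
            rw [show (2:ℝ) ^ 8 = 256 by norm_num]; field_simp; ring
        _ ≤ (63 / 64 : ℝ) ^ ((n - 8) / 8) * (63 / 64) :=
            mul_le_mul_of_nonneg_right h2 (by norm_num)
    · have h0 : n / 8 = 0 := Nat.div_eq_of_lt (by omega)
      rw [h0, pow_zero, div_le_one (by positivity)]
      exact_mod_cast r2_le_pow n

theorem count_binary_rich_words (n : ℕ) (hn : 8 ≤ n) :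
    r2 n ≤ 252 * r2 (n - 8) ∧
    (r2 n : ℝ) / 2 ^ n ≤ (63 / 64 : ℝ) ^ (n / 8) := by
  exact ⟨r2_le_mul n hn, ratio n⟩
end
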